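/- arXiv:1504.02434 — 2 statements merged into one kernel-verified Lean document; each statement's English description precedes it below -/
import Mathlib

section
/- Let M be a von Neumann algebra, let λ be a σ-weakly continuous linear functional on M with polar decomposition λ = ψv (ψ a positive normal functional, v a partial isometry). Then for every a ∈ M one has ‖λa‖ ≤ ψ(v a a* v*)^{1/2} · ‖λ‖^{1/2}, where (λa)(x) := λ(ax). -/
open Complex in
private lemma herm_aux {M : Type*} [NormedRing M] [StarRing M]
    [NormedAlgebra ℂ M] [StarModule ℂ M]
    (ψ : M →L[ℂ] ℂ) (hreal : ∀ x : M, (ψ (star x * x)).im = 0) (x y : M) :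
    (starRingEnd ℂ) (ψ (star x * y)) = ψ (star y * x) := by
  have h1 := hreal (x + y)
  have h2 := hreal (x + Complex.I • y)
  simp only [star_add, add_mul, mul_add, map_add, star_smul, smul_mul_assoc,
    mul_smul_comm, map_smul, smul_eq_mul, Complex.add_im, Complex.mul_im, Complex.mul_re,
    Complex.star_def, Complex.conj_I, Complex.neg_re, Complex.neg_im,
    Complex.I_re, Complex.I_im, hreal x, hreal y] at h1 h2
  have hx := hreal x
  have hy := hreal y
  apply Complex.ext <;> simp only [Complex.conj_re, Complex.conj_im] <;> linarith

private lemma cs_aux {M : Type*} [NormedRing M] [StarRing M]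
    [NormedAlgebra ℂ M] [StarModule ℂ M]
    (ψ : M →L[ℂ] ℂ)
    (hpos : ∀ x : M, 0 ≤ (ψ (star x * x)).re)
    (hreal : ∀ x : M, (ψ (star x * x)).im = 0) (x y : M) :
    ‖ψ (star x * y)‖ ^ 2 ≤ (ψ (star x * x)).re * (ψ (star y * y)).re := by
  letI c : PreInnerProductSpace.Core ℂ M :=
    { inner := fun a b => ψ (star a * b)
      conj_inner_symm := fun a b => herm_aux ψ hreal b a
      re_inner_nonneg := fun a => hpos a
      add_left := fun a b z => by simp [star_add, add_mul]
      smul_left := fun a b r => by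
        simp [star_smul, smul_mul_assoc, smul_eq_mul] }
  have h : ‖ψ (star x * y)‖ * ‖ψ (star y * x)‖ ≤
      (ψ (star x * x)).re * (ψ (star y * y)).re :=
    @InnerProductSpace.Core.inner_mul_inner_self_le ℂ M _ _ _ c x y
  rw [← herm_aux ψ hreal x y, RCLike.norm_conj] at h
  simpa [sq] using h

/-- Lemma 2.1 (first inequality): if `λ = ψ v` is the polar decomposition of a
σ-weakly continuous functional, then `‖λ a‖ ≤ ψ(v a a* v*)^{1/2} ‖λ‖^{1/2}`. -/
theorem stmt_0 {M : Type*} [NormedRing M] [StarRing M] [CStarRing M]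
    [NormedAlgebra ℂ M] [CompleteSpace M] [StarModule ℂ M]
    (lam ψ : M →L[ℂ] ℂ) (v : M)
    (hpos : ∀ x : M, 0 ≤ (ψ (star x * x)).re)
    (hreal : ∀ x : M, (ψ (star x * x)).im = 0)
    (hpolar : ∀ x : M, lam x = ψ (v * x))
    (hpartial : v * star v * v = v)
    (hnorm : ‖ψ‖ = ‖lam‖) (a : M) :
    ‖lam.comp (ContinuousLinearMap.mul ℂ M a)‖ ≤
      Real.sqrt ((ψ (v * (a * (star a * star v)))).re) * Real.sqrt ‖lam‖ := by
  set P : ℝ := (ψ (v * (a * (star a * star v)))).re with hP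
  have hlam0 : (0:ℝ) ≤ ‖lam‖ := norm_nonneg _
  have hP0 : 0 ≤ P := by
    have := hpos (star (v * a))
    simpa [hP, star_star, star_mul, mul_assoc] using this
  apply ContinuousLinearMap.opNorm_le_bound
  · positivity
  intro x
  have hval : (lam.comp (ContinuousLinearMap.mul ℂ M a)) x = ψ (star (star (v * a)) * x) := by
    simp [hpolar, star_star, mul_assoc]
  rw [hval]
  have hcs := cs_aux ψ hpos hreal (star (v * a)) x
  have h1 : (ψ (star (star (v * a)) * star (v * a))).re = P := by
    simp [hP, star_star, star_mul, mul_assoc]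
  have h2 : (ψ (star x * x)).re ≤ ‖lam‖ * ‖x‖ ^ 2 := by
    calc (ψ (star x * x)).re ≤ ‖ψ (star x * x)‖ := Complex.re_le_norm _
      _ ≤ ‖ψ‖ * ‖star x * x‖ := ψ.le_opNorm _
      _ = ‖lam‖ * ‖x‖ ^ 2 := by
          rw [hnorm, CStarRing.norm_star_mul_self, sq]
  have hsq : ‖ψ (star (star (v * a)) * x)‖ ^ 2 ≤ P * (‖lam‖ * ‖x‖ ^ 2) := by
    calc ‖ψ (star (star (v * a)) * x)‖ ^ 2
        ≤ (ψ (star (star (v * a)) * star (v * a))).re * (ψ (star x * x)).re := hcs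
      _ ≤ P * (‖lam‖ * ‖x‖ ^ 2) := by
          rw [h1]
          exact mul_le_mul_of_nonneg_left h2 hP0
  have := Real.sqrt_le_sqrt hsq
  rw [Real.sqrt_sq (norm_nonneg _)] at this
  calc ‖ψ (star (star (v * a)) * x)‖ ≤ Real.sqrt (P * (‖lam‖ * ‖x‖ ^ 2)) := this
    _ = Real.sqrt P * Real.sqrt ‖lam‖ * ‖x‖ := by
        rw [Real.sqrt_mul hP0, Real.sqrt_mul hlam0, Real.sqrt_sq (norm_nonneg _), mul_assoc]
end

section
/- Let M be a von Neumann algebra, λ a σ-weakly continuous linear functional on M with polar decomposition λ = ψv. Then for every a ∈ M one has ‖aλ‖ ≤ ψ(a*a)^{1/2} · ‖λ‖^{1/2}, where (aλ)(x) := λ(xa). -/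
/-- Lemma 2.1 (second inequality): if `λ = ψ v` is the polar decomposition, then
`‖a λ‖ ≤ ψ(a* a)^{1/2} ‖λ‖^{1/2}`, where `(aλ)(x) = λ(x a)`. -/
theorem stmt_1 {M : Type*} [NormedRing M] [StarRing M] [CStarRing M]
    [NormedAlgebra ℂ M] [CompleteSpace M] [StarModule ℂ M]
    (lam ψ : M →L[ℂ] ℂ) (v : M)
    (hpos : ∀ x : M, 0 ≤ (ψ (star x * x)).re)
    (hreal : ∀ x : M, (ψ (star x * x)).im = 0)
    (hpolar : ∀ x : M, lam x = ψ (v * x))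
    (hpartial : v * star v * v = v)
    (hnorm : ‖ψ‖ = ‖lam‖) (a : M) :
    ‖lam.comp ((ContinuousLinearMap.mul ℂ M).flip a)‖ ≤
      Real.sqrt ((ψ (star a * a)).re) * Real.sqrt ‖lam‖ := by
  -- ‖v‖ ≤ 1
  have hv1 : ‖v‖ ≤ 1 := by
    have hpe : (v * star v) * (v * star v) = v * star v := by
      have h : (v * star v) * (v * star v) = (v * star v * v) * star v := by
        noncomm_ring
      rw [hpartial] at h; exact h
    have hps : star (v * star v) = v * star v := by simp [star_mul]
    have h1 : ‖v * star v‖ * ‖v * star v‖ = ‖v * star v‖ := by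
      conv_lhs => rw [← CStarRing.norm_star_mul_self (x := v * star v)]
      rw [hps, hpe]
    have h2 : ‖v * star v‖ ≤ 1 := by nlinarith [norm_nonneg (v * star v)]
    have h3 : ‖v‖ * ‖v‖ = ‖v * star v‖ := (CStarRing.norm_self_mul_star (x := v)).symm
    nlinarith [norm_nonneg v]
  -- conjugate symmetry via polarization
  have hsymm : ∀ x y : M, (starRingEnd ℂ) (ψ (star y * x)) = ψ (star x * y) := by
    intro x y
    have e1 : star (x + y) * (x + y)
        = star x * x + (star x * y + (star y * x + star y * y)) := by
      simp only [star_add]; noncomm_ring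
    have e2 : star (x + Complex.I • y) * (x + Complex.I • y)
        = star x * x + (Complex.I • (star x * y) +
          ((-Complex.I) • (star y * x) + star y * y)) := by
      simp only [star_add, star_smul, Complex.star_def, Complex.conj_I]
      simp only [add_mul, mul_add, smul_mul_assoc, mul_smul_comm, smul_smul, smul_add,
        neg_smul, neg_mul, Complex.I_mul_I, neg_neg, one_smul]
      match_scalars <;> simp [Complex.I_sq]
    have h1 := hreal (x + y)
    rw [e1] at h1
    simp only [map_add, Complex.add_im, hreal x, hreal y] at h1
    have h2 := hreal (x + Complex.I • y)
    rw [e2] at h2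
    simp only [map_add, map_smul, Complex.add_im, hreal x, hreal y, smul_eq_mul,
      Complex.mul_im, Complex.I_re, Complex.I_im, Complex.neg_re, Complex.neg_im] at h2
    apply Complex.ext <;> simp [Complex.conj_re, Complex.conj_im] <;> linarith
  letI inst : Inner ℂ M := ⟨fun x y => ψ (star x * y)⟩
  letI core : PreInnerProductSpace.Core ℂ M :=
    { toInner := inst
      conj_inner_symm := fun x y => hsymm x y
      re_inner_nonneg := fun x => hpos x
      add_left := fun x y z => by
        show ψ (star (x + y) * z) = ψ (star x * z) + ψ (star y * z)
        simp [star_add, add_mul]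
      smul_left := fun x y r => by
        show ψ (star (r • x) * y) = (starRingEnd ℂ) r * ψ (star x * y)
        simp [star_smul, smul_mul_assoc, Complex.star_def] }
  have CS : ∀ x y : M, ‖ψ (star x * y)‖ * ‖ψ (star x * y)‖
      ≤ (ψ (star x * x)).re * (ψ (star y * y)).re := by
    intro x y
    have h := InnerProductSpace.Core.inner_mul_inner_self_le (𝕜 := ℂ) (c := core) x y
    have hxy : (inner ℂ x y : ℂ) = ψ (star x * y) := rfl
    have hyx0 : (inner ℂ y x : ℂ) = ψ (star y * x) := rfl
    have hyx : ‖(inner ℂ y x : ℂ)‖ = ‖ψ (star x * y)‖ := by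
      rw [hyx0, ← hsymm y x]; exact (RCLike.norm_conj _)
    simp [hxy, hyx, RCLike.re_to_complex] at h; exact h
  have hC : (0:ℝ) ≤ Real.sqrt ((ψ (star a * a)).re) * Real.sqrt ‖lam‖ := by positivity
  refine ContinuousLinearMap.opNorm_le_bound _ hC (fun x => ?_)
  have happ : (lam.comp ((ContinuousLinearMap.mul ℂ M).flip a)) x = lam (x * a) := rfl
  rw [happ, hpolar]
  set y : M := v * x with hy
  have hform : v * (x * a) = star (star y) * a := by rw [star_star, hy, mul_assoc]
  rw [hform]
  -- bound re ψ (star (star y) * star y) = re ψ (y * star y)... careful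
  have hcs := CS (star y) a
  have hyy : (ψ (star (star y) * star y)).re ≤ ‖lam‖ * (‖x‖ * ‖x‖) := by
    have h0 : (ψ (star (star y) * star y)).re ≤ ‖ψ (star (star y) * star y)‖ := by
      exact Complex.re_le_norm _
    have h1 : ‖ψ (star (star y) * star y)‖ ≤ ‖ψ‖ * ‖star (star y) * star y‖ :=
      ψ.le_opNorm _
    have h2 : ‖star (star y) * star y‖ ≤ ‖y‖ * ‖y‖ := by
      calc ‖star (star y) * star y‖ ≤ ‖star (star y)‖ * ‖star y‖ := norm_mul_le _ _
        _ = ‖y‖ * ‖y‖ := by rw [norm_star, norm_star]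
    have h3 : ‖y‖ ≤ ‖x‖ := by
      calc ‖y‖ ≤ ‖v‖ * ‖x‖ := norm_mul_le _ _
        _ ≤ 1 * ‖x‖ := by gcongr
        _ = ‖x‖ := one_mul _
    have h4 : (0:ℝ) ≤ ‖ψ‖ := norm_nonneg _
    have h5 : ‖y‖ * ‖y‖ ≤ ‖x‖ * ‖x‖ := by nlinarith [norm_nonneg y]
    calc (ψ (star (star y) * star y)).re ≤ ‖ψ‖ * ‖star (star y) * star y‖ :=
          le_trans h0 h1
      _ ≤ ‖ψ‖ * (‖x‖ * ‖x‖) := by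
          refine mul_le_mul_of_nonneg_left (le_trans h2 h5) h4
      _ = ‖lam‖ * (‖x‖ * ‖x‖) := by rw [hnorm]
  have hbound : ‖ψ (star (star y) * a)‖ * ‖ψ (star (star y) * a)‖
      ≤ (‖lam‖ * (‖x‖ * ‖x‖)) * (ψ (star a * a)).re := by
    refine le_trans hcs ?_
    exact mul_le_mul_of_nonneg_right hyy (hpos a)
  -- conclude via sqrt
  have key : ‖ψ (star (star y) * a)‖
      ≤ Real.sqrt ((ψ (star a * a)).re) * Real.sqrt ‖lam‖ * ‖x‖ := by
    have h6 : ‖ψ (star (star y) * a)‖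
        = Real.sqrt (‖ψ (star (star y) * a)‖ * ‖ψ (star (star y) * a)‖) := by
      rw [Real.sqrt_mul_self (norm_nonneg _)]
    rw [h6]
    calc Real.sqrt (‖ψ (star (star y) * a)‖ * ‖ψ (star (star y) * a)‖)
        ≤ Real.sqrt ((‖lam‖ * (‖x‖ * ‖x‖)) * (ψ (star a * a)).re) :=
          Real.sqrt_le_sqrt hbound
      _ = Real.sqrt ((ψ (star a * a)).re) * Real.sqrt ‖lam‖ * ‖x‖ := by
          rw [show (‖lam‖ * (‖x‖ * ‖x‖)) * (ψ (star a * a)).re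
              = ((ψ (star a * a)).re * ‖lam‖) * (‖x‖ * ‖x‖) by ring,
            Real.sqrt_mul (mul_nonneg (hpos a) (norm_nonneg lam)), Real.sqrt_mul (hpos a),
            Real.sqrt_mul_self (norm_nonneg x)]
  exact key
end
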